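/- Let q₀ and q₁ be probability distributions on a finite set S, let p ∈ [0,1], and let q = p·q₀ + (1-p)·q₁. For m ∈ S with q(m) > 0, let r(m) = p·q₀(m)/q(m). Then the mutual information between the source bit and the observation satisfies I = H(p) - Σ_m q(m)·H(r(m)) ≥ H(p) - 2√(p(1-p))·Σ_m √(q₀(m)·q₁(m)). -/

import Mathlib

section Aux

private lemma log_le_half_sub' {t : ℝ} (ht : 1 ≤ t) : Real.log t ≤ (t - 1/t)/2 := by
  have ht0 : 0 < t := by linarith
  set u : ℝ := (t - 1/t)/2 with hu
  have hu0 : 0 ≤ u := by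
    rw [hu]
    have : 1/t ≤ 1 := by rw [div_le_one ht0]; exact ht
    linarith
  have hq : 1 + u + u^2/2 ≥ t := by
    have h2 : 1 + u + u^2/2 - t = (t-1)^4/(8*t^2) := by
      rw [eq_div_iff (by positivity : (8:ℝ)*t^2 ≠ 0)]
      rw [hu]; field_simp; ring
    nlinarith [h2 ▸ (by positivity : (0:ℝ) ≤ (t-1)^4/(8*t^2))]
  have := Real.quadratic_le_exp_of_nonneg hu0
  rw [Real.log_le_iff_le_exp ht0]
  linarith

private lemma half_sub_le_log' {x : ℝ} (hx0 : 0 < x) (hx1 : x ≤ 1) :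
    (x - 1/x)/2 ≤ Real.log x := by
  have h := log_le_half_sub' (t := 1/x) (by rw [le_div_iff₀ hx0]; linarith)
  rw [Real.log_div one_ne_zero (ne_of_gt hx0), Real.log_one] at h
  have hxx : 1/(1/x) = x := by field_simp
  rw [hxx] at h
  linarith

private lemma neg_mul_log_le' {x : ℝ} (hx0 : 0 ≤ x) (hx1 : x ≤ 1) :
    -(x * Real.log x) ≤ Real.sqrt x * (1 - x) := by
  rcases eq_or_lt_of_le hx0 with h | h
  · simp [← h]
  · have hs0 : 0 < Real.sqrt x := Real.sqrt_pos.2 h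
    have hs1 : Real.sqrt x ≤ 1 := by
      rw [show (1:ℝ) = Real.sqrt 1 by simp]; exact Real.sqrt_le_sqrt hx1
    have hlog : Real.log (Real.sqrt x) = Real.log x / 2 := Real.log_sqrt hx0
    have hb := half_sub_le_log' hs0 hs1
    rw [hlog] at hb
    have hlx : Real.sqrt x - 1/Real.sqrt x ≤ Real.log x := by linarith
    have hsq : Real.sqrt x * Real.sqrt x = x := Real.mul_self_sqrt hx0
    have hstep : -(x * Real.log x) ≤ x * (1/Real.sqrt x - Real.sqrt x) := by
      nlinarith [hlx, h]
    calc -(x * Real.log x) ≤ x * (1/Real.sqrt x - Real.sqrt x) := hstep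
      _ = Real.sqrt x * (1 - x) := by
          field_simp
          nlinarith [hsq]

private lemma atanh_aux' : ∀ v ∈ Set.Ico (0:ℝ) 1,
    0 ≤ Real.log (1+v) - Real.log (1-v) - 2*v := by
  set g : ℝ → ℝ := fun v => Real.log (1+v) - Real.log (1-v) - 2*v with hg
  have hd : ∀ v ∈ Set.Ioo (0:ℝ) 1, HasDerivAt g (1/(1+v) + 1/(1-v) - 2) v := by
    intro v hv
    have h1 : (1:ℝ) + v ≠ 0 := by nlinarith [hv.1, hv.2]
    have h2 : (1:ℝ) - v ≠ 0 := by nlinarith [hv.1, hv.2]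
    have d1 : HasDerivAt (fun v : ℝ => Real.log (1+v)) (1/(1+v)) v := by
      have := ((hasDerivAt_const v (1:ℝ)).add (hasDerivAt_id' v)).log h1
      simpa using this
    have d2 : HasDerivAt (fun v : ℝ => Real.log (1-v)) ((0-1)/(1-v)) v :=
      ((hasDerivAt_const v (1:ℝ)).sub (hasDerivAt_id' v)).log h2
    have d3 : HasDerivAt (fun v : ℝ => 2*v) 2 v := by
      simpa using (hasDerivAt_id v).const_mul 2
    have := (d1.sub d2).sub d3
    refine this.congr_deriv ?_
    ring
  have hcont : ContinuousOn g (Set.Ico (0:ℝ) 1) := by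
    apply ContinuousOn.sub
    apply ContinuousOn.sub
    · exact (Real.continuousOn_log.comp (by fun_prop) (by
        intro v hv; simp only [Set.mem_Ico] at hv
        simp only [Set.mem_compl_iff, Set.mem_singleton_iff]
        intro h; nlinarith [hv.1, hv.2]))
    · exact (Real.continuousOn_log.comp (by fun_prop) (by
        intro v hv; simp only [Set.mem_Ico] at hv
        simp only [Set.mem_compl_iff, Set.mem_singleton_iff]
        intro h; nlinarith [hv.1, hv.2]))
    · fun_prop
  have hmono : MonotoneOn g (Set.Ico (0:ℝ) 1) := by
    apply monotoneOn_of_deriv_nonneg (convex_Ico 0 1) hcont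
    · rw [interior_Ico]
      intro v hv
      exact ((hd v hv).differentiableAt).differentiableWithinAt
    · rw [interior_Ico]
      intro v hv
      rw [(hd v hv).deriv]
      have h1 : (0:ℝ) < 1 + v := by nlinarith [hv.1, hv.2]
      have h2 : (0:ℝ) < 1 - v := by nlinarith [hv.1, hv.2]
      have heq : 1/(1+v) + 1/(1-v) - 2 = 2*v^2 / ((1+v)*(1-v)) := by
        field_simp; ring
      rw [heq]
      positivity
  intro v hv
  have h0 : g 0 = 0 := by simp [hg]
  have := hmono (Set.mem_Ico.2 ⟨le_refl 0, one_pos⟩) hv hv.1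
  rw [h0] at this
  exact this

private lemma pinsker_aux' : ∀ v ∈ Set.Ico (0:ℝ) 1,
    v^2 ≤ (1+v) * Real.log (1+v) + (1-v) * Real.log (1-v) := by
  set f : ℝ → ℝ := fun v => (1+v) * Real.log (1+v) + (1-v) * Real.log (1-v) - v^2 with hf
  have hd : ∀ v ∈ Set.Ioo (0:ℝ) 1,
      HasDerivAt f (Real.log (1+v) - Real.log (1-v) - 2*v) v := by
    intro v hv
    have h1 : (1:ℝ) + v ≠ 0 := by nlinarith [hv.1, hv.2]
    have h2 : (1:ℝ) - v ≠ 0 := by nlinarith [hv.1, hv.2]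
    have e1 : HasDerivAt (fun v : ℝ => 1 + v) 1 v := by
      simpa using (hasDerivAt_id' v).const_add (1:ℝ)
    have e2 : HasDerivAt (fun v : ℝ => 1 - v) (0-1) v :=
      (hasDerivAt_const v (1:ℝ)).sub (hasDerivAt_id' v)
    have d1 := e1.mul (e1.log h1)
    have d2 := e2.mul (e2.log h2)
    have d3 : HasDerivAt (fun v : ℝ => v^2) (2*v) v := by
      simpa using hasDerivAt_pow 2 v
    have := (d1.add d2).sub d3
    refine this.congr_deriv ?_
    field_simp
    ring
  have hcont : ContinuousOn f (Set.Ico (0:ℝ) 1) := by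
    have hl1 : ContinuousOn (fun v : ℝ => Real.log (1+v)) (Set.Ico (0:ℝ) 1) :=
      Real.continuousOn_log.comp (by fun_prop) (by
        intro v hv; simp only [Set.mem_Ico] at hv
        simp only [Set.mem_compl_iff, Set.mem_singleton_iff]
        intro h; nlinarith [hv.1, hv.2])
    have hl2 : ContinuousOn (fun v : ℝ => Real.log (1-v)) (Set.Ico (0:ℝ) 1) :=
      Real.continuousOn_log.comp (by fun_prop) (by
        intro v hv; simp only [Set.mem_Ico] at hv
        simp only [Set.mem_compl_iff, Set.mem_singleton_iff]
        intro h; nlinarith [hv.1, hv.2])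
    apply ContinuousOn.sub
    · exact (ContinuousOn.mul (by fun_prop) hl1).add (ContinuousOn.mul (by fun_prop) hl2)
    · fun_prop
  have hmono : MonotoneOn f (Set.Ico (0:ℝ) 1) := by
    apply monotoneOn_of_deriv_nonneg (convex_Ico 0 1) hcont
    · rw [interior_Ico]
      exact fun v hv => ((hd v hv).differentiableAt).differentiableWithinAt
    · rw [interior_Ico]
      intro v hv
      rw [(hd v hv).deriv]
      exact atanh_aux' v ⟨hv.1.le, hv.2⟩
  intro v hv
  have h0 : f 0 = 0 := by simp [hf]
  have := hmono (Set.mem_Ico.2 ⟨le_refl 0, one_pos⟩) hv hv.1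
  rw [h0] at this
  simp only [hf] at this
  linarith

private lemma pinsker' {x : ℝ} (hx0 : 0 ≤ x) (hx1 : x ≤ 1) :
    -(x * Real.log x) - (1-x) * Real.log (1-x) ≤ Real.log 2 - 2*(x - 1/2)^2 := by
  have hlt : (0.6931471803:ℝ) < Real.log 2 := Real.log_two_gt_d9
  rcases eq_or_lt_of_le hx0 with h0 | h0
  · simp [← h0]; nlinarith
  rcases eq_or_lt_of_le hx1 with h1 | h1
  · rw [h1]; simp; nlinarith
  have key : (2*x-1)^2 ≤ 2 * Real.log 2 + 2*(x * Real.log x) + 2*((1-x) * Real.log (1-x)) := by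
    have hlog2x : Real.log (2*x) = Real.log 2 + Real.log x :=
      Real.log_mul two_ne_zero (ne_of_gt h0)
    have hlog2x' : Real.log (2*(1-x)) = Real.log 2 + Real.log (1-x) :=
      Real.log_mul two_ne_zero (by linarith)
    rcases le_or_gt (1/2 : ℝ) x with hh | hh
    · have := pinsker_aux' (2*x-1) ⟨by linarith, by linarith⟩
      have e1 : (1:ℝ) + (2*x-1) = 2*x := by ring
      have e2 : (1:ℝ) - (2*x-1) = 2*(1-x) := by ring
      rw [e1, e2, hlog2x, hlog2x'] at this
      nlinarith [this]
    · have := pinsker_aux' (1-2*x) ⟨by linarith, by linarith⟩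
      have e1 : (1:ℝ) + (1-2*x) = 2*(1-x) := by ring
      have e2 : (1:ℝ) - (1-2*x) = 2*x := by ring
      rw [e1, e2, hlog2x, hlog2x'] at this
      nlinarith [this]
  nlinarith [key]

private lemma caseB_alg' {L g d : ℝ} (hLlb : (0.6931471803:ℝ) < L) (hub : g ≤ 1/2)
    (hglb : 4*L^2 < 1 + 2*g) (hdelta : 2*d^2 = 1/2 - 2*g^2) :
    L - 2*d^2 ≤ 2 * L * g := by
  have hgl : L - 1/2 ≤ g := by nlinarith [hglb, hLlb]
  have hfac : (2*g - 1) * (g - L + 1/2) ≤ 0 :=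
    mul_nonpos_of_nonpos_of_nonneg (by linarith) (by linarith)
  nlinarith [hfac, hdelta]

private lemma entropy_nat_le' {x : ℝ} (hx0 : 0 ≤ x) (hx1 : x ≤ 1) :
    -(x * Real.log x) - (1-x) * Real.log (1-x) ≤
      2 * Real.log 2 * Real.sqrt (x * (1-x)) := by
  have hx1' : (0:ℝ) ≤ 1 - x := by linarith
  set L := Real.log 2 with hL
  have hLlb : (0.6931471803:ℝ) < L := Real.log_two_gt_d9
  set g := Real.sqrt (x * (1-x)) with hg
  have hg0 : 0 ≤ g := Real.sqrt_nonneg _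
  have hgsq : g^2 = x * (1-x) := Real.sq_sqrt (by positivity)
  have hgmul : g = Real.sqrt x * Real.sqrt (1-x) := Real.sqrt_mul hx0 _
  have hsx : Real.sqrt x ^ 2 = x := Real.sq_sqrt hx0
  have hsy : Real.sqrt (1-x) ^ 2 = 1 - x := Real.sq_sqrt hx1'
  have hsx0 : 0 ≤ Real.sqrt x := Real.sqrt_nonneg _
  have hsy0 : 0 ≤ Real.sqrt (1-x) := Real.sqrt_nonneg _
  rcases le_or_gt (Real.sqrt x + Real.sqrt (1-x)) (2*L) with hc | hc
  · have b1 : -(x * Real.log x) ≤ Real.sqrt x * (1 - x) := neg_mul_log_le' hx0 hx1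
    have b2 : -((1-x) * Real.log (1-x)) ≤ Real.sqrt (1-x) * x := by
      have := neg_mul_log_le' hx1' (by linarith : 1 - x ≤ 1)
      calc -((1-x) * Real.log (1-x)) ≤ Real.sqrt (1-x) * (1 - (1-x)) := this
        _ = Real.sqrt (1-x) * x := by ring
    have e1 : Real.sqrt x * (1 - x) = g * Real.sqrt (1-x) := by
      rw [hgmul]; nlinarith [hsy]
    have e2 : Real.sqrt (1-x) * x = g * Real.sqrt x := by
      rw [hgmul]; nlinarith [hsx]
    calc -(x * Real.log x) - (1-x) * Real.log (1-x)
        ≤ g * Real.sqrt (1-x) + g * Real.sqrt x := by rw [← e1, ← e2]; linarith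
      _ = g * (Real.sqrt x + Real.sqrt (1-x)) := by ring
      _ ≤ g * (2*L) := by apply mul_le_mul_of_nonneg_left hc hg0
      _ = 2 * L * g := by ring
  · have hs2 : (Real.sqrt x + Real.sqrt (1-x))^2 = 1 + 2*g := by
      rw [hgmul]; nlinarith [hsx, hsy]
    have hglb : 4*L^2 < 1 + 2*g := by nlinarith [hc, hsx0, hsy0]
    have hub : g ≤ 1/2 := by
      have h14 : x * (1-x) ≤ 1/4 := by nlinarith [sq_nonneg (x - 1/2)]
      calc g ≤ Real.sqrt (1/4) := Real.sqrt_le_sqrt h14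
        _ = 1/2 := by
          rw [show (1/4:ℝ) = (1/2)^2 by norm_num, Real.sqrt_sq (by norm_num : (0:ℝ) ≤ 1/2)]
    have hpin := pinsker' hx0 hx1
    have hdelta : 2*(x-1/2)^2 = 1/2 - 2*g^2 := by rw [hgsq]; ring
    have halg := caseB_alg' hLlb hub hglb hdelta
    linarith

end Aux

/-- Binary entropy in bits, with the convention `0 * logb 2 0 = 0`. -/
noncomputable def binH (p : ℝ) : ℝ := -(p * Real.logb 2 p) - (1 - p) * Real.logb 2 (1 - p)

private lemma binH_le_sqrt {x : ℝ} (hx0 : 0 ≤ x) (hx1 : x ≤ 1) :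
    binH x ≤ 2 * Real.sqrt (x * (1-x)) := by
  have hL : (0:ℝ) < Real.log 2 := Real.log_pos (by norm_num)
  have h := entropy_nat_le' hx0 hx1
  have hrw : binH x = (-(x * Real.log x) - (1-x) * Real.log (1-x)) / Real.log 2 := by
    unfold binH Real.logb
    field_simp
  rw [hrw, div_le_iff₀ hL]
  linarith [h]

private lemma term_le {a b : ℝ} (ha : 0 ≤ a) (hb : 0 ≤ b) :
    (a + b) * binH (a / (a + b)) ≤ 2 * Real.sqrt (a * b) := by
  rcases eq_or_lt_of_le (by positivity : (0:ℝ) ≤ a + b) with h | h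
  · rw [← h, zero_mul]
    positivity
  · set r := a / (a+b) with hr
    have hr0 : 0 ≤ r := by positivity
    have hr1 : r ≤ 1 := by
      rw [hr, div_le_one h]; linarith
    have h1r : 1 - r = b / (a+b) := by
      rw [hr]; field_simp; ring
    have hprod : r * (1 - r) = a * b / (a+b)^2 := by
      rw [h1r, hr, div_mul_div_comm, sq]
    have hsq : Real.sqrt (r * (1-r)) = Real.sqrt (a*b) / (a+b) := by
      have heq : a*b/(a+b)^2 = (Real.sqrt (a*b)/(a+b))^2 := by
        rw [div_pow, Real.sq_sqrt (by positivity : (0:ℝ) ≤ a*b)]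
      rw [hprod, heq, Real.sqrt_sq (by positivity)]
    have hb' := binH_le_sqrt hr0 hr1
    calc (a+b) * binH r ≤ (a+b) * (2 * Real.sqrt (r * (1-r))) :=
          mul_le_mul_of_nonneg_left hb' h.le
      _ = (a+b) * (2 * (Real.sqrt (a*b) / (a+b))) := by rw [hsq]
      _ = 2 * Real.sqrt (a*b) := by field_simp

theorem mutual_info_ge_entropy_sub_bhattacharyya {S : Type} [Fintype S]
    (q0 q1 : S → ℝ) (h0 : ∀ m, 0 ≤ q0 m) (h1 : ∀ m, 0 ≤ q1 m)
    (hs0 : ∑ m, q0 m = 1) (hs1 : ∑ m, q1 m = 1)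
    (p : ℝ) (hp : p ∈ Set.Icc (0:ℝ) 1) :
    binH p - ∑ m, (p * q0 m + (1-p) * q1 m) *
        binH (p * q0 m / (p * q0 m + (1-p) * q1 m)) ≥
      binH p - 2 * Real.sqrt (p * (1-p)) * ∑ m, Real.sqrt (q0 m * q1 m) := by
  obtain ⟨hp0, hp1⟩ := hp
  have hp1' : (0:ℝ) ≤ 1 - p := by linarith
  have hAB : ∑ m, (p * q0 m + (1-p) * q1 m) *
      binH (p * q0 m / (p * q0 m + (1-p) * q1 m)) ≤
      2 * Real.sqrt (p * (1-p)) * ∑ m, Real.sqrt (q0 m * q1 m) := by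
    rw [mul_assoc, Finset.mul_sum, Finset.mul_sum]
    apply Finset.sum_le_sum
    intro m _
    have ha : 0 ≤ p * q0 m := mul_nonneg hp0 (h0 m)
    have hb : 0 ≤ (1-p) * q1 m := mul_nonneg hp1' (h1 m)
    have := term_le ha hb
    have hab : (p * q0 m) * ((1-p) * q1 m) = (p * (1-p)) * (q0 m * q1 m) := by ring
    have hsqrt : Real.sqrt ((p * q0 m) * ((1-p) * q1 m)) =
        Real.sqrt (p * (1-p)) * Real.sqrt (q0 m * q1 m) := by
      rw [hab, Real.sqrt_mul (by positivity)]
    calc (p * q0 m + (1-p) * q1 m) * binH (p * q0 m / (p * q0 m + (1-p) * q1 m))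
        ≤ 2 * Real.sqrt ((p * q0 m) * ((1-p) * q1 m)) := this
      _ = 2 * (Real.sqrt (p * (1-p)) * Real.sqrt (q0 m * q1 m)) := by
          rw [hsqrt]
  exact sub_le_sub_left hAB _
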